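/- For every Dyck path D with n up steps and n down steps, there exists a unique S-Motzkin path of length 3n obtained by inserting n horizontal steps into D such that each horizontal step is inserted in the leftmost possible position (greedily from left to right) making the non-down-step subword equal to (hu)^n. -/

import Mathlib

inductive Step : Type
  | u : Step
  | d : Step
  | h : Step
deriving DecidableEq, Repr

def stepVal : Step → ℤ
  | Step.u => 1
  | Step.d => -1
  | Step.h => 0

/-- Sum of step values (final height) of a word. -/
def hsum (w : List Step) : ℤ := (w.map stepVal).sum

/-- All prefixes have nonnegative height. -/
def NonnegPrefixes (w : List Step) : Prop := ∀ p : List Step, p <+: w → 0 ≤ hsum p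

/-- A Motzkin path: nonnegative prefix heights and total height 0. -/
def IsMotzkin (w : List Step) : Prop := NonnegPrefixes w ∧ hsum w = 0

/-- The word (hu)^n. -/
def huWord (n : ℕ) : List Step := (List.replicate n [Step.h, Step.u]).flatten

/-- An S-Motzkin path with n up, n down, n horizontal steps:
a Motzkin path whose subword of non-down steps is (hu)^n. -/
def IsSMotzkin (n : ℕ) (w : List Step) : Prop :=
  IsMotzkin w ∧ w.count Step.u = n ∧ w.count Step.d = n ∧ w.count Step.h = n ∧
    w.filter (fun s => s ≠ Step.d) = huWord n

/-- A nonempty word over {h, u}. -/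
def HUBlock (A : List Step) : Prop := A ≠ [] ∧ ∀ s ∈ A, s = Step.h ∨ s = Step.u

/-- Glue blocks A_i with runs of d_i down steps: A_0 d^{d_1} A_1 d^{d_2} ... -/
def joinAM (As : List (List Step)) (ds : List ℕ) : List Step :=
  (List.zipWith (fun A k => A ++ List.replicate k Step.d) As ds).flatten

/-- w decomposes as A_0 D_1 A_1 D_2 ... A_{t-1} D_t with A_i nonempty over {h,u}
and D_i nonempty runs of down steps. -/
def AMDecomp (w : List Step) (As : List (List Step)) (ds : List ℕ) : Prop :=
  As.length = ds.length ∧ (∀ A ∈ As, HUBlock A) ∧ (∀ k ∈ ds, 0 < k) ∧ w = joinAM As ds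

/-- An Asinowski–Mansour path with n up, n down, n horizontal steps. -/
def IsAM (n : ℕ) (w : List Step) : Prop :=
  IsMotzkin w ∧ w.count Step.u = n ∧ w.count Step.d = n ∧ w.count Step.h = n ∧
    ∃ As ds, AMDecomp w As ds

/-- A Dyck path with n up and n down steps, encoded over the alphabet Step. -/
def IsDyck (n : ℕ) (w : List Step) : Prop :=
  (∀ s ∈ w, s = Step.u ∨ s = Step.d) ∧ w.count Step.u = n ∧ w.count Step.d = n ∧
    NonnegPrefixes w

/-- Height of the path at the start of step i. -/
def heightAt (w : List Step) (i : ℕ) : ℤ := hsum (w.take i)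

/-- Two horizontal steps at positions i < j, at the same height, with all steps
strictly between them at or above that height. -/
def Matched (w : List Step) (i j : ℕ) : Prop :=
  i < j ∧ w[i]? = some Step.h ∧ w[j]? = some Step.h ∧
    heightAt w i = heightAt w j ∧ ∀ k, i < k → k < j → heightAt w i ≤ heightAt w k

/-- Positions of the horizontal steps of w, from left to right. -/
def hPositions (w : List Step) : List ℕ := List.findIdxs (fun s => s = Step.h) w

/-- Lexicographic (weak) order on lists of naturals. -/
def LexLe (l l' : List ℕ) : Prop := l = l' ∨ List.Lex (· < ·) l l'

/-- w is an S-Motzkin word obtained by inserting horizontal steps into D. -/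
def ValidIns (D w : List Step) : Prop :=
  (∃ m, IsSMotzkin m w) ∧ w.filter (fun s => s ≠ Step.h) = D

/-- w is the greedy h-insertion into D: each h leftmost, i.e. the list of positions
of the h's is lexicographically minimal among all valid insertions. -/
def GreedyFor (D w : List Step) : Prop :=
  ValidIns D w ∧ ∀ w', ValidIns D w' → LexLe (hPositions w) (hPositions w')

-- lemmas
lemma hsum_cons (s : Step) (t : List Step) : hsum (s :: t) = stepVal s + hsum t := by
  simp [hsum]

lemma hsum_filter (w : List Step) : hsum (w.filter (fun s => s ≠ Step.h)) = hsum w := by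
  induction w with
  | nil => rfl
  | cons s t ih =>
    simp only [ne_eq, decide_not] at ih ⊢
    cases s <;> simp [List.filter_cons, hsum_cons, ih, stepVal]

lemma prefix_filter {p q : List Step} (f : Step → Bool) (h : p <+: q) :
    p.filter f <+: q.filter f := by
  obtain ⟨t, rfl⟩ := h
  exact ⟨t.filter f, (List.filter_append _ _).symm⟩

lemma hsum_eq_counts (w : List Step) :
    hsum w = (w.count Step.u : ℤ) - (w.count Step.d : ℤ) := by
  induction w with
  | nil => rfl
  | cons s t ih =>
    cases s <;> simp [hsum_cons, ih, List.count_cons, stepVal] <;> ring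

lemma length_eq_counts (w : List Step) :
    w.length = w.count Step.u + w.count Step.d + w.count Step.h := by
  induction w with
  | nil => rfl
  | cons s t ih =>
    cases s <;> simp [List.count_cons, ih] <;> ring

lemma hPositions_cons (s : Step) (t : List Step) :
    hPositions (s :: t) = if s = Step.h then 0 :: (hPositions t).map (· + 1)
      else (hPositions t).map (· + 1) := by
  cases s <;> simp [hPositions, List.findIdxs_cons, List.findIdxs_start (s := 1)]

lemma eq_of_filter_hpos : ∀ (w w' : List Step),
    w.filter (fun s => s ≠ Step.h) = w'.filter (fun s => s ≠ Step.h) →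
    hPositions w = hPositions w' → w = w' := by
  intro w
  induction w with
  | nil =>
    intro w' hf hp
    cases w' with
    | nil => rfl
    | cons b t' =>
      exfalso
      by_cases hb : b = Step.h
      · subst hb
        rw [hPositions_cons] at hp
        rw [show hPositions [] = [] from rfl] at hp
        simp at hp
      · simp only [List.filter_nil, List.filter_cons, ne_eq, decide_not] at hf
        rw [if_pos (by simp [hb])] at hf
        simp at hf
  | cons a t ih =>
    intro w' hf hp
    simp only [ne_eq, decide_not] at hf ih
    cases w' with
    | nil =>
      exfalso
      by_cases ha : a = Step.h
      · subst ha
        rw [hPositions_cons] at hp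
        rw [show hPositions [] = [] from rfl] at hp
        simp at hp
      · simp only [List.filter_nil, List.filter_cons] at hf
        rw [if_pos (by simp [ha])] at hf
        simp at hf
    | cons b t' =>
      rw [hPositions_cons, hPositions_cons] at hp
      by_cases ha : a = Step.h <;> by_cases hb : b = Step.h
      · subst ha hb
        rw [if_pos rfl, if_pos rfl] at hp
        have hp' : hPositions t = hPositions t' :=
          List.map_injective_iff.mpr (add_left_injective 1) (by simpa using hp)
        simp only [List.filter_cons,
          if_neg (show ¬((!decide (Step.h = Step.h)) = true) by simp)] at hf
        exact congrArg _ (ih t' hf hp')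
      · exfalso
        rw [if_pos ha, if_neg hb] at hp
        cases h' : hPositions t' with
        | nil => rw [h'] at hp; simp at hp
        | cons x xs => rw [h'] at hp; simp at hp
      · exfalso
        rw [if_neg ha, if_pos hb] at hp
        cases h' : hPositions t with
        | nil => rw [h'] at hp; simp at hp
        | cons x xs => rw [h'] at hp; simp at hp
      · rw [if_neg ha, if_neg hb] at hp
        have hp' : hPositions t = hPositions t' :=
          List.map_injective_iff.mpr (add_left_injective 1) hp
        simp only [List.filter_cons] at hf
        rw [if_pos (by simp [ha]), if_pos (by simp [hb])] at hf
        obtain ⟨rfl, hf'⟩ := List.cons.injEq _ _ _ _ ▸ hf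
        exact congrArg _ (ih t' hf' hp')

def ins (D : List Step) : List Step :=
  D.flatMap (fun s => if s = Step.u then [Step.h, Step.u] else [s])

lemma huWord_succ (n : ℕ) : huWord (n + 1) = Step.h :: Step.u :: huWord n := by
  simp [huWord, List.replicate_succ]

lemma count_filter_ne_h (a : Step) (ha : a ≠ Step.h) (w : List Step) :
    (w.filter (fun s => s ≠ Step.h)).count a = w.count a := by
  induction w with
  | nil => rfl
  | cons s t ih =>
    cases s <;> cases a <;>
      simp_all [List.filter_cons, List.count_cons]

lemma ins_filter (D : List Step) (hD : ∀ s ∈ D, s = Step.u ∨ s = Step.d) :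
    (ins D).filter (fun s => s ≠ Step.h) = D := by
  induction D with
  | nil => rfl
  | cons s t ih =>
    have hs := hD s (by simp)
    have ht := fun x hx => hD x (List.mem_cons_of_mem _ hx)
    have ih' := ih ht
    simp only [ne_eq, decide_not] at ih' ⊢
    rcases hs with rfl | rfl <;>
      simp [ins, List.flatMap_cons, List.filter_cons] <;>
      simpa [ins] using ih'

lemma ins_counts (D : List Step) :
    (ins D).count Step.u = D.count Step.u ∧ (ins D).count Step.d = D.count Step.d ∧
      (ins D).count Step.h = D.count Step.u + D.count Step.h := by
  induction D with
  | nil => exact ⟨rfl, rfl, rfl⟩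
  | cons s t ih =>
    obtain ⟨h1, h2, h3⟩ := ih
    cases s <;>
      simp_all [ins, List.flatMap_cons, List.count_cons, List.count_append] <;> omega

lemma ins_filter_d (D : List Step) (hD : ∀ s ∈ D, s = Step.u ∨ s = Step.d) :
    (ins D).filter (fun s => s ≠ Step.d) = huWord (D.count Step.u) := by
  induction D with
  | nil => rfl
  | cons s t ih =>
    have hs := hD s (by simp)
    have ht := fun x hx => hD x (List.mem_cons_of_mem _ hx)
    have ih' := ih ht
    simp only [ne_eq, decide_not] at ih' ⊢
    rcases hs with rfl | rfl
    · rw [show (Step.u :: t).count Step.u = t.count Step.u + 1 by simp [List.count_cons],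
        huWord_succ]
      simp [ins, List.flatMap_cons, List.filter_cons]
      simpa [ins] using ih'
    · rw [show (Step.d :: t).count Step.u = t.count Step.u by simp [List.count_cons]]
      simp [ins, List.flatMap_cons, List.filter_cons]
      simpa [ins] using ih'

instance : Fintype Step :=
  ⟨{Step.u, Step.d, Step.h}, by intro x; cases x <;> simp⟩

/-- for every Dyck path D with n up and n down steps there is a unique
S-Motzkin path of length 3n obtained by inserting n horizontal steps into D with
every h in the leftmost possible position (h-position list lexicographically minimal). -/
theorem greedy_insertion_exists_unique (n : ℕ) (D : List Step) (hD : IsDyck n D) :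
    ∃! w : List Step, IsSMotzkin n w ∧ w.filter (fun s => s ≠ Step.h) = D ∧
      ∀ w', ValidIns D w' → LexLe (hPositions w) (hPositions w') := by
  obtain ⟨hDel, hDu, hDd, hDnn⟩ := hD
  have key : ∀ w, ValidIns D w → IsSMotzkin n w := by
    rintro w ⟨⟨m, hm⟩, hfil⟩
    have hcu : w.count Step.u = m := hm.2.1
    have hcu' : D.count Step.u = w.count Step.u := by
      rw [← hfil, count_filter_ne_h Step.u (by simp)]
    have hmn : m = n := by omega
    subst hmn; exact hm
  have hlen : ∀ w, ValidIns D w → w.length = 3 * n := by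
    intro w hw
    have h := key w hw
    rw [length_eq_counts, h.2.1, h.2.2.1, h.2.2.2.1]; ring
  have hS0 : ValidIns D (ins D) := by
    have hfil : (ins D).filter (fun s => s ≠ Step.h) = D := ins_filter D hDel
    refine ⟨⟨n, ?_⟩, hfil⟩
    obtain ⟨c1, c2, c3⟩ := ins_counts D
    have hDh : D.count Step.h = 0 := by
      rw [List.count_eq_zero]
      intro hmem
      rcases hDel _ hmem with h | h <;> simp at h
    refine ⟨⟨?_, ?_⟩, by omega, by omega, by omega, ?_⟩
    · intro p hp
      have h1 : p.filter (fun s => s ≠ Step.h) <+: D := hfil ▸ prefix_filter _ hp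
      have := hDnn _ h1
      rwa [hsum_filter] at this
    · rw [hsum_eq_counts]; omega
    · rw [ins_filter_d D hDel, hDu]
  obtain ⟨w, hwS, hmin⟩ := Set.exists_min_image {w | ValidIns D w} hPositions
    ((List.finite_length_eq Step (3 * n)).subset (fun w hw => hlen w hw)) ⟨ins D, hS0⟩
  have minLex : ∀ w', ValidIns D w' → LexLe (hPositions w) (hPositions w') := by
    intro w' hw'
    rcases lt_or_eq_of_le (hmin w' hw') with hlt | heq
    · exact Or.inr hlt
    · exact Or.inl heq
  refine ⟨w, ⟨key w hwS, hwS.2, minLex⟩, ?_⟩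
  rintro v ⟨hv1, hv2, hv3⟩
  have hvS : ValidIns D v := ⟨⟨n, hv1⟩, hv2⟩
  have l1 : hPositions v ≤ hPositions w := by
    rcases hv3 w hwS with h | h
    · exact le_of_eq h
    · exact le_of_lt h
  have l2 : hPositions w ≤ hPositions v := hmin v hvS
  exact eq_of_filter_hpos v w (hv2.trans hwS.2.symm) (le_antisymm l1 l2)
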